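/- For every ℓ ∈ ℕ₊, m ∈ ℕ and k ∈ ℕ₊ there exists n ∈ ℕ with the following property: for every k-uniform hypergraph H and every function f : V(H) → [ℓ] such that every fiber f⁻¹(i) has size at least n, there exist a set Q of weak compositions of k of length ℓ and a subset W ⊆ V(H) with every fiber of f restricted to W of size at least m, such that for every k-element subset e ⊆ W, e is an edge of H if and only if the tuple (|e ∩ f⁻¹(j)|)_{j∈[ℓ]} belongs to Q. -/

import Mathlib

/-- Finite hypergraph Ramsey theorem over an arbitrary linear order, with colors in a
finite nonempty type `C`. -/
theorem myRamsey (C : Type) [Fintype C] [Nonempty C] (k : ℕ) : ∀ (t : ℕ),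
    ∃ N : ℕ, ∀ (α : Type) [LinearOrder α] (S : Finset α) (χ : Finset α → C),
      N ≤ S.card → ∃ H, H ⊆ S ∧ t ≤ H.card ∧ ∃ c, ∀ e, e ⊆ H → e.card = k → χ e = c := by
  classical
  induction k with
  | zero =>
    intro t
    refine ⟨t, fun α _ S χ h => ⟨S, Finset.Subset.refl S, h, χ ∅, fun e _ he => ?_⟩⟩
    rw [Finset.card_eq_zero] at he; rw [he]
  | succ k IH =>
    intro t
    -- prehomogeneous sets
    have prehom : ∀ (s : ℕ), ∃ N : ℕ, ∀ (α : Type) [LinearOrder α] (S : Finset α)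
        (χ : Finset α → C), N ≤ S.card → ∃ P, P ⊆ S ∧ s ≤ P.card ∧ ∃ g : α → C,
          ∀ e, e ⊆ P → e.card = k + 1 → ∀ hne : e.Nonempty, χ e = g (e.min' hne) := by
      intro s
      induction s with
      | zero =>
        refine ⟨0, fun α _ S χ _ => ⟨∅, Finset.empty_subset S, Nat.zero_le _, fun _ => χ ∅,
          fun e he hek hne => ?_⟩⟩
        exfalso
        rw [Finset.subset_empty] at he
        rw [he] at hek
        simp at hek
      | succ s ihs =>
        obtain ⟨N₀, h₀⟩ := ihs
        obtain ⟨N₁, h₁⟩ := IH N₀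
        refine ⟨N₁ + 1, fun α _ S χ hS => ?_⟩
        have hne : S.Nonempty := Finset.card_pos.mp (by omega)
        set a := S.min' hne with ha
        have haS : a ∈ S := S.min'_mem hne
        have hcard' : N₁ ≤ (S.erase a).card := by
          rw [Finset.card_erase_of_mem haS]; omega
        obtain ⟨H₁, hH₁sub, hH₁card, c, hc⟩ := h₁ α (S.erase a) (fun T => χ (insert a T)) hcard'
        obtain ⟨P', hP'sub, hP'card, g', hg'⟩ := h₀ α H₁ χ hH₁card
        have haP' : a ∉ P' := fun h => (Finset.notMem_erase a S) (hH₁sub (hP'sub h))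
        have hPsub : insert a P' ⊆ S :=
          Finset.insert_subset haS ((hP'sub.trans hH₁sub).trans (Finset.erase_subset a S))
        refine ⟨insert a P', hPsub, ?_, fun b => if b = a then c else g' b, ?_⟩
        · rw [Finset.card_insert_of_notMem haP']; omega
        · intro e heP hek hne'
          by_cases hae : a ∈ e
          · have hmin : e.min' hne' = a := by
              apply le_antisymm (Finset.min'_le e a hae)
              exact S.min'_le _ (hPsub (heP (e.min'_mem hne')))
            rw [hmin]
            show χ e = if a = a then c else g' a
            rw [if_pos rfl]
            have he' : e = insert a (e.erase a) := (Finset.insert_erase hae).symm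
            rw [he']
            refine hc (e.erase a) ?_ ?_
            · intro b hb
              have hb' := Finset.mem_erase.mp hb
              have : b ∈ insert a P' := heP hb'.2
              exact hP'sub ((Finset.mem_insert.mp this).resolve_left hb'.1)
            · rw [Finset.card_erase_of_mem hae, hek]
              omega
          · have heP' : e ⊆ P' := by
              intro b hb
              rcases Finset.mem_insert.mp (heP hb) with h | h
              · rw [h] at hb; exact absurd hb hae
              · exact h
            show χ e = if e.min' hne' = a then c else g' (e.min' hne')
            have hna : ¬ e.min' hne' = a := fun h => hae (h ▸ e.min'_mem hne')
            rw [if_neg hna]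
            exact hg' e heP' hek hne'
    obtain ⟨N, hN⟩ := prehom (Fintype.card C * t + 1)
    refine ⟨N, fun α _ S χ hS => ?_⟩
    obtain ⟨P, hPS, hPcard, g, hg⟩ := hN α S χ hS
    obtain ⟨c, -, hc⟩ := Finset.exists_lt_card_fiber_of_mul_lt_card_of_maps_to
      (f := g) (s := P) (t := Finset.univ) (n := t) (fun a _ => Finset.mem_univ _)
      (by rw [Finset.card_univ]; omega)
    refine ⟨P.filter (fun b => g b = c), (Finset.filter_subset _ _).trans hPS, by omega, c, ?_⟩
    intro e he hek
    have hne : e.Nonempty := Finset.card_pos.mp (by omega)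
    rw [hg e (he.trans (Finset.filter_subset _ _)) hek hne]
    exact (Finset.mem_filter.mp (he (e.min'_mem hne))).2

/-- A downward closed subset of `Fin k` is an initial segment. -/
theorem downclosed_mem_iff {k : ℕ} (s : Finset (Fin k))
    (hdc : ∀ a b : Fin k, a ≤ b → b ∈ s → a ∈ s) (i : Fin k) : i ∈ s ↔ i.val < s.card := by
  constructor
  · intro hi
    have h1 : Finset.Iic i ⊆ s := fun b hb => hdc b i (Finset.mem_Iic.mp hb) hi
    have h2 := Finset.card_le_card h1
    rw [Fin.card_Iic] at h2
    omega
  · intro hi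
    by_contra hmem
    have h1 : s ⊆ Finset.Iio i := by
      intro b hb
      refine Finset.mem_Iio.mpr (lt_of_not_ge fun hle => hmem (hdc i b hle hb))
    have h2 := Finset.card_le_card h1
    rw [Fin.card_Iio] at h2
    omega

theorem mono_le_iff {k ℓ : ℕ} (φ : Fin k → Fin ℓ) (hφ : Monotone φ) (i : Fin k) (j : Fin ℓ) :
    φ i ≤ j ↔ i.val < (Finset.univ.filter fun i' => φ i' ≤ j).card := by
  have := downclosed_mem_iff (Finset.univ.filter fun i' => φ i' ≤ j)
    (fun a b hab hb => Finset.mem_filter.mpr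
      ⟨Finset.mem_univ _, le_trans (hφ hab) (Finset.mem_filter.mp hb).2⟩) i
  rw [← this]
  simp

/-- A monotone map `Fin k → Fin ℓ` is determined by its fiber cardinalities. -/
theorem mono_eq {k ℓ : ℕ} (φ φ' : Fin k → Fin ℓ) (hφ : Monotone φ) (hφ' : Monotone φ')
    (h : ∀ j, (Finset.univ.filter fun i => φ i = j).card
      = (Finset.univ.filter fun i => φ' i = j).card) : φ = φ' := by
  classical
  have e1 : ∀ (ψ : Fin k → Fin ℓ) (j : Fin ℓ), (Finset.univ.filter fun i => ψ i ≤ j).card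
      = ∑ j' ∈ Finset.Iic j, (Finset.univ.filter fun i => ψ i = j').card := by
    intro ψ j
    rw [Finset.card_eq_sum_card_fiberwise
      (f := ψ) (t := Finset.Iic j)
      (fun x hx => Finset.mem_Iic.mpr (Finset.mem_filter.mp hx).2)]
    refine Finset.sum_congr rfl fun j' hj' => ?_
    congr 1
    ext i
    simp only [Finset.mem_filter, Finset.mem_univ, true_and]
    constructor
    · rintro ⟨-, h2⟩; exact h2
    · intro h2; exact ⟨h2 ▸ Finset.mem_Iic.mp hj', h2⟩
  have key : ∀ j, (Finset.univ.filter fun i => φ i ≤ j).card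
      = (Finset.univ.filter fun i => φ' i ≤ j).card := by
    intro j
    rw [e1 φ j, e1 φ' j]
    exact Finset.sum_congr rfl fun j' _ => h j'
  funext i
  refine le_antisymm ?_ ?_
  · rw [mono_le_iff φ hφ i (φ' i), key]
    rw [← mono_le_iff φ' hφ' i (φ' i)]
  · rw [mono_le_iff φ' hφ' i (φ i), ← key]
    rw [← mono_le_iff φ hφ i (φ i)]

/-- Partite Ramsey theorem for `k`-uniform hypergraphs: for every `ℓ ∈ ℕ₊`, `m ∈ ℕ`, `k ∈ ℕ₊`
there is `n` such that for every `k`-uniform hypergraph `H` (given by its edge predicate `E` on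
`k`-element finsets of the vertex type `V`) and every `f : V → Fin ℓ` all of whose fibers have
size at least `n`, there is a set `Q` of weak compositions of `k` of length `ℓ` and a subset
`W ⊆ V` with all fibers of `f` restricted to `W` of size at least `m`, such that a `k`-subset of
`W` is an edge iff its trace sizes on the fibers of `f` form a composition in `Q`. -/
theorem stmt2 (ℓ : ℕ) (hℓ : 0 < ℓ) (m : ℕ) (k : ℕ) (hk : 0 < k) :
    ∃ n : ℕ, ∀ (V : Type) [Fintype V] [DecidableEq V]
      (E : Finset V → Prop) (f : V → Fin ℓ),
      (∀ i : Fin ℓ, n ≤ (Finset.univ.filter fun v => f v = i).card) →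
      ∃ (Q : Set (Fin ℓ → ℕ)) (W : Finset V),
        (∀ q ∈ Q, ∑ j, q j = k) ∧
        (∀ i : Fin ℓ, m ≤ (W.filter fun v => f v = i).card) ∧
        (∀ e : Finset V, e ⊆ W → e.card = k →
          (E e ↔ (fun j => (e.filter fun v => f v = j).card) ∈ Q)) := by
  classical
  obtain rfl | hm := Nat.eq_zero_or_pos m
  · refine ⟨0, fun V _ _ E f _ => ⟨∅, ∅, by simp, by simp, ?_⟩⟩
    intro e he hek
    exfalso
    rw [Finset.subset_empty] at he
    rw [he] at hek
    simp at hek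
    omega
  obtain ⟨N, hN⟩ := myRamsey ((Fin k → Fin ℓ) → Prop) k (ℓ * m)
  refine ⟨N, fun V _ _ E f hfib => ?_⟩
  -- enumerate the fibers
  set x : Fin ℓ → Fin N → V := fun j p =>
    ((Finset.univ.filter fun v => f v = j).equivFin.symm (Fin.castLE (hfib j) p) : V) with hx
  have hfx : ∀ j p, f (x j p) = j := by
    intro j p
    have := ((Finset.univ.filter fun v => f v = j).equivFin.symm (Fin.castLE (hfib j) p)).2
    exact (Finset.mem_filter.mp this).2
  have hxinj : ∀ j, Function.Injective (x j) := by
    intro j p p' hpp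
    have h1 := Subtype.coe_injective hpp
    have h2 := (Finset.univ.filter fun v => f v = j).equivFin.symm.injective h1
    exact Fin.castLE_injective _ h2
  -- apply Ramsey
  obtain ⟨H, hHS, hHcard, c, hc⟩ := hN (Fin N) Finset.univ
    (fun S φ => ∃ h : S.card = k,
      E (Finset.image (fun i => x (φ i) (S.orderEmbOfFin h i)) Finset.univ))
    (by simp)
  obtain ⟨A, hAH, hAcard⟩ := Finset.exists_subset_card_eq hHcard
  set emb := A.orderEmbOfFin hAcard with hemb
  set iso := A.orderIsoOfFin hAcard with hiso
  -- index arithmetic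
  have hιb : ∀ jr : Fin ℓ × Fin m, m * jr.1.val + jr.2.val < ℓ * m := by
    rintro ⟨j, r⟩
    have h1 : m * j.val + r.val < m * (j.val + 1) := by
      rw [Nat.mul_succ]; exact Nat.add_lt_add_left r.isLt _
    have h2 : m * (j.val + 1) ≤ m * ℓ := Nat.mul_le_mul_left m j.isLt
    calc m * j.val + r.val < m * (j.val + 1) := h1
      _ ≤ m * ℓ := h2
      _ = ℓ * m := Nat.mul_comm m ℓ
  set ι : Fin ℓ × Fin m → Fin (ℓ * m) := fun jr => ⟨m * jr.1.val + jr.2.val, hιb jr⟩ with hι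
  have hpart : ∀ t : Fin (ℓ * m), t.val / m < ℓ := by
    intro t
    rw [Nat.div_lt_iff_lt_mul hm]
    exact t.isLt
  set part : Fin (ℓ * m) → Fin ℓ := fun t => ⟨t.val / m, hpart t⟩ with hpartdef
  have hpartι : ∀ jr : Fin ℓ × Fin m, part (ι jr) = jr.1 := by
    rintro ⟨j, r⟩
    apply Fin.ext
    show (m * j.val + r.val) / m = j.val
    rw [Nat.mul_add_div hm, Nat.div_eq_of_lt r.isLt]
    omega
  have hpartmono : Monotone part := by
    intro t t' htt
    exact Nat.div_le_div_right (c := m) htt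
  -- vertex selection
  set y : Fin ℓ × Fin m → V := fun jr => x jr.1 (emb (ι jr)) with hy
  have hfy : ∀ jr : Fin ℓ × Fin m, f (y jr) = jr.1 := fun jr => hfx _ _
  have hyinj : Function.Injective y := by
    rintro ⟨j, r⟩ ⟨j', r'⟩ hyy
    have hj : j = j' := by
      have := hfy (j, r)
      rw [hyy] at this
      rw [hfy (j', r')] at this
      exact this.symm
    subst hj
    have h1 := hxinj j hyy
    have h2 := emb.injective h1
    have h3 : m * j.val + r.val = m * j.val + r'.val := congrArg Fin.val h2
    exact Prod.ext rfl (Fin.ext (Nat.add_left_cancel h3))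
  set W : Finset V := Finset.image y Finset.univ with hW
  -- fibers of W
  have hWfib : ∀ i : Fin ℓ, (W.filter fun v => f v = i)
      = Finset.image (fun r : Fin m => y (i, r)) Finset.univ := by
    intro i
    ext v
    constructor
    · intro hv
      obtain ⟨hvW, hfv⟩ := Finset.mem_filter.mp hv
      obtain ⟨jr, -, rfl⟩ := Finset.mem_image.mp hvW
      obtain ⟨j, r⟩ := jr
      have hji : j = i := (hfy (j, r)).symm.trans hfv
      subst hji
      exact Finset.mem_image.mpr ⟨r, Finset.mem_univ _, rfl⟩
    · intro hv
      obtain ⟨r, -, rfl⟩ := Finset.mem_image.mp hv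
      exact Finset.mem_filter.mpr
        ⟨Finset.mem_image.mpr ⟨(i, r), Finset.mem_univ _, rfl⟩, hfy (i, r)⟩
  have hWfibcard : ∀ i : Fin ℓ, (W.filter fun v => f v = i).card = m := by
    intro i
    rw [hWfib i, Finset.card_image_of_injective _ (fun r r' h => by
      have := hyinj h; exact (Prod.ext_iff.mp this).2), Finset.card_univ, Fintype.card_fin]
  -- the key representation lemma
  have main : ∀ e : Finset V, e ⊆ W → e.card = k →
      ∃ φ : Fin k → Fin ℓ, Monotone φ ∧
        (∀ j, (Finset.univ.filter fun i => φ i = j).card = (e.filter fun v => f v = j).card) ∧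
        (E e ↔ c φ) := by
    intro e heW hek
    set P : Finset (Fin ℓ × Fin m) := Finset.univ.filter (fun jr => y jr ∈ e) with hP
    have himg : Finset.image y P = e := by
      ext v
      simp only [hP, Finset.mem_image, Finset.mem_filter, Finset.mem_univ, true_and]
      constructor
      · rintro ⟨jr, hin, rfl⟩; exact hin
      · intro hv
        obtain ⟨jr, -, rfl⟩ := Finset.mem_image.mp (heW hv)
        exact ⟨jr, hv, rfl⟩
    have hPcard : P.card = k := by
      rw [← hek, ← himg, Finset.card_image_of_injective _ hyinj]
    have hπinj : Function.Injective (fun jr : Fin ℓ × Fin m => emb (ι jr)) := by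
      intro a b hab
      have h1 := emb.injective hab
      have h2 : m * a.1.val + a.2.val = m * b.1.val + b.2.val := congrArg Fin.val h1
      have hj : a.1 = b.1 := by
        have := congrArg part h1
        rwa [hpartι, hpartι] at this
      have hv : a.1.val = b.1.val := congrArg Fin.val hj
      rw [hv] at h2
      exact Prod.ext hj (Fin.ext (Nat.add_left_cancel h2))
    set S : Finset (Fin N) := Finset.image (fun jr => emb (ι jr)) P with hSdef
    have hScard : S.card = k := by
      rw [hSdef, Finset.card_image_of_injective _ hπinj, hPcard]
    have hSA : S ⊆ A := by
      intro p hp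
      obtain ⟨jr, -, rfl⟩ := Finset.mem_image.mp hp
      exact A.orderEmbOfFin_mem hAcard (ι jr)
    set sfun := S.orderEmbOfFin hScard with hsfun
    have hsmem : ∀ i, sfun i ∈ A := fun i => hSA (S.orderEmbOfFin_mem hScard i)
    set φ : Fin k → Fin ℓ := fun i => part (iso.symm ⟨sfun i, hsmem i⟩) with hφ
    have hφmono : Monotone φ := by
      intro i i' hii
      refine hpartmono ?_
      have h1 : sfun i ≤ sfun i' := sfun.monotone hii
      have h2 : (⟨sfun i, hsmem i⟩ : {z // z ∈ A}) ≤ ⟨sfun i', hsmem i'⟩ := h1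
      exact iso.symm.monotone h2
    have hsymm : ∀ (jr : Fin ℓ × Fin m) (h : emb (ι jr) ∈ A),
        iso.symm ⟨emb (ι jr), h⟩ = ι jr := by
      intro jr h
      rw [OrderIso.symm_apply_eq]
      exact Subtype.ext (A.coe_orderIsoOfFin_apply hAcard (ι jr)).symm
    have hrepr : ∀ i, ∃ jr ∈ P, sfun i = emb (ι jr) ∧ φ i = jr.1 := by
      intro i
      have hmem : sfun i ∈ S := S.orderEmbOfFin_mem hScard i
      obtain ⟨jr, hjrP, hjr⟩ := Finset.mem_image.mp hmem
      refine ⟨jr, hjrP, hjr.symm, ?_⟩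
      have : (⟨sfun i, hsmem i⟩ : {z // z ∈ A}) = ⟨emb (ι jr), hjr ▸ hsmem i⟩ :=
        Subtype.ext hjr.symm
      rw [hφ]
      show part (iso.symm ⟨sfun i, hsmem i⟩) = jr.1
      rw [this, hsymm jr _, hpartι]
    have hzinj : Function.Injective (fun i : Fin k => x (φ i) (sfun i)) := by
      intro i i' hii
      change x (φ i) (sfun i) = x (φ i') (sfun i') at hii
      have hj : φ i = φ i' := by
        have h1 := hfx (φ i) (sfun i)
        rw [hii] at h1
        rw [hfx (φ i') (sfun i')] at h1
        exact h1.symm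
      rw [hj] at hii
      exact sfun.injective (hxinj _ hii)
    have heq : Finset.image (fun i => x (φ i) (sfun i)) Finset.univ = e := by
      apply Finset.eq_of_subset_of_card_le
      · intro v hv
        obtain ⟨i, -, rfl⟩ := Finset.mem_image.mp hv
        obtain ⟨jr, hjrP, hs, hφi⟩ := hrepr i
        rw [hφi, hs]
        have : y jr ∈ e := (Finset.mem_filter.mp hjrP).2
        exact this
      · rw [hek, Finset.card_image_of_injective _ hzinj, Finset.card_univ, Fintype.card_fin]
    have hcount : ∀ j, (Finset.univ.filter fun i => φ i = j).card
        = (e.filter fun v => f v = j).card := by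
      intro j
      have himg2 : (e.filter fun v => f v = j)
          = Finset.image (fun i => x (φ i) (sfun i)) (Finset.univ.filter fun i => φ i = j) := by
        ext v
        simp only [Finset.mem_filter, Finset.mem_image, Finset.mem_univ, true_and]
        constructor
        · rintro ⟨hv, hfv⟩
          rw [← heq] at hv
          obtain ⟨i, -, rfl⟩ := Finset.mem_image.mp hv
          rw [hfx (φ i) (sfun i)] at hfv
          exact ⟨i, hfv, rfl⟩
        · rintro ⟨i, hφi, rfl⟩
          constructor
          · rw [← heq]
            exact Finset.mem_image.mpr ⟨i, Finset.mem_univ _, rfl⟩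
          · rw [hfx (φ i) (sfun i)]; exact hφi
      rw [himg2, Finset.card_image_of_injective _ hzinj]
    refine ⟨φ, hφmono, hcount, ?_⟩
    have hhom := hc S (hSA.trans hAH) hScard
    have hhom2 := congrFun hhom φ
    rw [← hhom2]
    constructor
    · intro hE
      exact ⟨hScard, heq ▸ hE⟩
    · rintro ⟨h', hE⟩
      exact heq ▸ hE
  -- conclusion
  refine ⟨{q : Fin ℓ → ℕ | ∃ e : Finset V, e ⊆ W ∧ e.card = k ∧ E e ∧
    ∀ j, (e.filter fun v => f v = j).card = q j}, W, ?_, ?_, ?_⟩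
  · rintro q ⟨e, heW, hek, -, hq⟩
    have h1 : e.card = ∑ j : Fin ℓ, (e.filter fun v => f v = j).card :=
      Finset.card_eq_sum_card_fiberwise (fun v _ => Finset.mem_univ (f v))
    calc ∑ j, q j = ∑ j, (e.filter fun v => f v = j).card :=
          Finset.sum_congr rfl fun j _ => (hq j).symm
      _ = e.card := h1.symm
      _ = k := hek
  · intro i
    rw [hWfibcard i]
  · intro e heW hek
    constructor
    · intro hE
      exact ⟨e, heW, hek, hE, fun j => rfl⟩
    · rintro ⟨e', he'W, he'k, hE', hq'⟩
      obtain ⟨φ, hφm, hφc, hφE⟩ := main e heW hek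
      obtain ⟨φ', hφ'm, hφ'c, hφ'E⟩ := main e' he'W he'k
      have : φ' = φ := by
        refine mono_eq φ' φ hφ'm hφm fun j => ?_
        rw [hφ'c j, hφc j, hq' j]
      rw [hφE]
      rw [this] at hφ'E
      exact hφ'E.mp hE'
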